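/- Let X ⊆ ℝ^d be a finite set partitioned into nonempty parts P₁,…,P_k, let C ⊆ ℝ^d be a finite nonempty set with cost(X,C) > 0, and let ℓ be a real with 0 < ℓ ≤ k. For x ∈ X set λ(x) := ℓ·cost(x,C)/cost(X,C), and sample a random subset S ⊆ X by including each x ∈ X independently with probability 1 − e^{−λ(x)}. Then the expected uncovered cost after this round satisfies Σ_{S⊆X} (∏_{x∈S}(1−e^{−λ(x)}))·(∏_{x∈X∖S} e^{−λ(x)}) · Σ_{i : P_i ∩ (C∪S) = ∅} cost(P_i, C∪S) ≤ e^{−ℓ/k} · cost(X,C). -/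

import Mathlib

open Finset
open scoped Classical

/-- `ptCost x C` is `cost(x, C) = min_{c ∈ C} ‖x - c‖²`. -/
noncomputable def ptCost {d : ℕ} (x : EuclideanSpace ℝ (Fin d))
    (C : Finset (EuclideanSpace ℝ (Fin d))) : ℝ :=
  sInf ((fun c => ‖x - c‖ ^ 2) '' (C : Set (EuclideanSpace ℝ (Fin d))))

/-- `setCost Y C` is `cost(Y, C) = Σ_{x ∈ Y} cost(x, C)`. -/
noncomputable def setCost {d : ℕ} (Y C : Finset (EuclideanSpace ℝ (Fin d))) : ℝ :=
  ∑ x ∈ Y, ptCost x C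


lemma ptCost_nonneg {d : ℕ} (x : EuclideanSpace ℝ (Fin d)) (C : Finset (EuclideanSpace ℝ (Fin d))) :
    0 ≤ ptCost x C := by
  apply Real.sInf_nonneg
  rintro y ⟨c, -, rfl⟩; positivity

lemma ptCost_anti {d : ℕ} (x : EuclideanSpace ℝ (Fin d)) {C D : Finset (EuclideanSpace ℝ (Fin d))}
    (hC : C.Nonempty) (h : C ⊆ D) : ptCost x D ≤ ptCost x C := by
  apply csInf_le_csInf
  · exact ⟨0, by rintro y ⟨c, -, rfl⟩; positivity⟩
  · exact (hC.to_set.image _)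
  · exact Set.image_mono (by exact_mod_cast h)

lemma setCost_nonneg {d : ℕ} (Y C : Finset (EuclideanSpace ℝ (Fin d))) : 0 ≤ setCost Y C :=
  Finset.sum_nonneg fun x _ => ptCost_nonneg x C

lemma key_analytic {r u : ℝ} (hr0 : 0 < r) (hr1 : r ≤ 1) (hu : 0 ≤ u) :
    u * Real.exp (-u) ≤ Real.exp (-r) * ((1 - r) * u + r ^ 2) := by
  have h1 : (u - r) + 1 ≤ Real.exp (u - r) := Real.add_one_le_exp _
  have h3 : 0 ≤ (1 - r) * u + r ^ 2 := by nlinarith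
  have h5 : u ≤ Real.exp (u - r) * ((1 - r) * u + r ^ 2) := by
    have h4 : (1 + (u - r)) * ((1 - r) * u + r ^ 2) ≤ Real.exp (u - r) * ((1 - r) * u + r ^ 2) :=
      mul_le_mul_of_nonneg_right (by linarith) h3
    nlinarith [sq_nonneg (u - r)]
  have := mul_le_mul_of_nonneg_right h5 (Real.exp_nonneg (-u))
  calc u * Real.exp (-u) ≤ Real.exp (u - r) * ((1 - r) * u + r ^ 2) * Real.exp (-u) := this
    _ = Real.exp (-r) * ((1 - r) * u + r ^ 2) := by
        rw [mul_right_comm, ← Real.exp_add]; ring_nf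

lemma sum_weights {α : Type*} [DecidableEq α] (X A : Finset α) (hA : A ⊆ X) (p q : α → ℝ)
    (hpq : ∀ x ∈ X, p x + q x = 1) :
    ∑ S ∈ X.powerset.filter (fun S => A ∩ S = ∅), (∏ x ∈ S, p x) * ∏ x ∈ X \ S, q x
      = ∏ x ∈ A, q x := by
  have hfil : X.powerset.filter (fun S => A ∩ S = ∅) = (X \ A).powerset := by
    ext S
    simp only [mem_filter, mem_powerset, Finset.subset_sdiff]
    constructor
    · rintro ⟨h1, h2⟩
      exact ⟨h1, Finset.disjoint_left.2 fun a haS haA =>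
        (Finset.eq_empty_iff_forall_notMem.1 h2 a (Finset.mem_inter.2 ⟨haA, haS⟩))⟩
    · rintro ⟨h1, h2⟩
      refine ⟨h1, Finset.eq_empty_iff_forall_notMem.2 fun a ha => ?_⟩
      rw [Finset.mem_inter] at ha
      exact (Finset.disjoint_right.1 h2) ha.1 ha.2
  rw [hfil]
  have hsplit : ∀ S ∈ (X \ A).powerset, (∏ x ∈ S, p x) * ∏ x ∈ X \ S, q x
      = (∏ x ∈ A, q x) * ((∏ x ∈ S, p x) * ∏ x ∈ (X \ A) \ S, q x) := by
    intro S hS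
    rw [Finset.mem_powerset] at hS
    have hXS : X \ S = A ∪ ((X \ A) \ S) := by
      ext a
      simp only [Finset.mem_sdiff, Finset.mem_union]
      constructor
      · rintro ⟨haX, haS⟩
        by_cases h : a ∈ A
        · exact Or.inl h
        · exact Or.inr ⟨⟨haX, h⟩, haS⟩
      · rintro (h | ⟨⟨haX, -⟩, haS⟩)
        · refine ⟨hA h, fun hc => ?_⟩
          have := hS hc
          rw [Finset.mem_sdiff] at this
          exact this.2 h
        · exact ⟨haX, haS⟩
    have hdis : Disjoint A ((X \ A) \ S) := by
      refine Finset.disjoint_left.2 fun a ha hb => ?_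
      rw [Finset.mem_sdiff, Finset.mem_sdiff] at hb
      exact hb.1.2 ha
    rw [hXS, Finset.prod_union hdis]
    ring
  rw [Finset.sum_congr rfl hsplit, ← Finset.mul_sum, ← Finset.prod_add,
    Finset.prod_congr rfl fun x hx => hpq x (Finset.mem_sdiff.1 hx).1, Finset.prod_const_one,
    mul_one]

/-- One round of `k`-means∥_Pois seeding with oversampling parameter `0 < ℓ ≤ k`:
if each `x ∈ X` is independently added with probability `1 − e^{−λ(x)}` where
`λ(x) = ℓ·cost(x,C)/cost(X,C)`, then the expected cost of the clusters left uncovered by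
`C ∪ S` is at most `e^{−ℓ/k}·cost(X,C)`. -/
theorem expected_uncovered_cost_one_round {d k : ℕ}
    (X C : Finset (EuclideanSpace ℝ (Fin d)))
    (P : Fin k → Finset (EuclideanSpace ℝ (Fin d)))
    (hPne : ∀ i, (P i).Nonempty)
    (hdisj : ∀ i j, i ≠ j → Disjoint (P i) (P j))
    (hcover : X = Finset.univ.biUnion P)
    (hC : C.Nonempty) (hcost : 0 < setCost X C)
    (ℓ : ℝ) (hℓ : 0 < ℓ) (hℓk : ℓ ≤ (k : ℝ)) :
    ∑ S ∈ X.powerset,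
        ((∏ x ∈ S, (1 - Real.exp (-(ℓ * ptCost x C / setCost X C)))) *
            ∏ x ∈ X \ S, Real.exp (-(ℓ * ptCost x C / setCost X C))) *
          ∑ i ∈ Finset.univ.filter (fun i : Fin k => P i ∩ (C ∪ S) = ∅),
            setCost (P i) (C ∪ S) ≤
      Real.exp (-ℓ / (k : ℝ)) * setCost X C := by
  have hk : (0 : ℝ) < (k : ℝ) := lt_of_lt_of_le hℓ hℓk
  set T := setCost X C with hTdef
  set lam : EuclideanSpace ℝ (Fin d) → ℝ := fun x => ℓ * ptCost x C / T with hlam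
  set p : EuclideanSpace ℝ (Fin d) → ℝ := fun x => 1 - Real.exp (-(lam x)) with hp
  set q : EuclideanSpace ℝ (Fin d) → ℝ := fun x => Real.exp (-(lam x)) with hq
  set w : Finset (EuclideanSpace ℝ (Fin d)) → ℝ :=
    fun S => (∏ x ∈ S, p x) * ∏ x ∈ X \ S, q x with hw
  have hlam0 : ∀ x, 0 ≤ lam x := fun x => by
    have := ptCost_nonneg x C; positivity
  have hq0 : ∀ x, 0 ≤ q x := fun x => (Real.exp_pos _).le
  have hp0 : ∀ x, 0 ≤ p x := fun x => by
    have : Real.exp (-(lam x)) ≤ 1 := Real.exp_le_one_iff.2 (neg_nonpos.2 (hlam0 x))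
    simp only [hp]; linarith
  have hw0 : ∀ S, 0 ≤ w S := fun S =>
    mul_nonneg (Finset.prod_nonneg fun x _ => hp0 x) (Finset.prod_nonneg fun x _ => hq0 x)
  have hPX : ∀ i, P i ⊆ X := fun i => by
    rw [hcover]; exact Finset.subset_biUnion_of_mem P (Finset.mem_univ i)
  -- t i
  set t : Fin k → ℝ := fun i => setCost (P i) C with ht
  have ht0 : ∀ i, 0 ≤ t i := fun i => setCost_nonneg _ _
  have hT : ∑ i, t i = T := by
    rw [hTdef, hcover]
    exact (Finset.sum_biUnion fun i _ j _ hij => hdisj i j hij).symm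
  -- Step 1+2: bound by the swapped-filter version
  have step1 : ∀ S ∈ X.powerset,
      w S * ∑ i ∈ Finset.univ.filter (fun i : Fin k => P i ∩ (C ∪ S) = ∅), setCost (P i) (C ∪ S)
      ≤ w S * ∑ i ∈ Finset.univ.filter (fun i : Fin k => P i ∩ S = ∅), t i := by
    intro S hS
    refine mul_le_mul_of_nonneg_left ?_ (hw0 S)
    calc ∑ i ∈ Finset.univ.filter (fun i : Fin k => P i ∩ (C ∪ S) = ∅), setCost (P i) (C ∪ S)
        ≤ ∑ i ∈ Finset.univ.filter (fun i : Fin k => P i ∩ (C ∪ S) = ∅), t i := by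
          refine Finset.sum_le_sum fun i _ => Finset.sum_le_sum fun x _ => ?_
          exact ptCost_anti x hC Finset.subset_union_left
      _ ≤ ∑ i ∈ Finset.univ.filter (fun i : Fin k => P i ∩ S = ∅), t i := by
          refine Finset.sum_le_sum_of_subset_of_nonneg ?_ (fun i _ _ => ht0 i)
          intro i hi
          simp only [Finset.mem_filter, Finset.mem_univ, true_and] at hi ⊢
          rw [Finset.inter_union_distrib_left] at hi
          exact Finset.union_eq_empty.1 hi |>.2
  -- Step 3: swap sums
  have step3 : ∑ S ∈ X.powerset, w S * ∑ i ∈ Finset.univ.filter (fun i : Fin k => P i ∩ S = ∅), t i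
      = ∑ i, (∏ x ∈ P i, q x) * t i := by
    have : ∀ S ∈ X.powerset,
        w S * ∑ i ∈ Finset.univ.filter (fun i : Fin k => P i ∩ S = ∅), t i
        = ∑ i, (if P i ∩ S = ∅ then w S * t i else 0) := by
      intro S _
      rw [Finset.mul_sum, Finset.sum_filter]
    rw [Finset.sum_congr rfl this, Finset.sum_comm]
    refine Finset.sum_congr rfl fun i _ => ?_
    rw [← Finset.sum_filter, ← Finset.sum_mul,
      sum_weights X (P i) (hPX i) p q (fun x _ => by simp [hp, hq])]
  -- Step 4: product of q over P i
  have step4 : ∀ i, ∏ x ∈ P i, q x = Real.exp (-(ℓ * t i / T)) := by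
    intro i
    rw [hq]
    rw [← Real.exp_sum]
    congr 1
    have hsum : ∑ x ∈ P i, lam x = ℓ * t i / T := by
      simp only [hlam]
      rw [← Finset.sum_div, ← Finset.mul_sum]
      rfl
    rw [Finset.sum_neg_distrib, hsum]
  -- Step 5
  have step5 : ∑ i, (∏ x ∈ P i, q x) * t i ≤ Real.exp (-ℓ / (k:ℝ)) * T := by
    have hr0 : 0 < ℓ / (k:ℝ) := div_pos hℓ hk
    have hr1 : ℓ / (k:ℝ) ≤ 1 := (div_le_one hk).2 hℓk
    have hbound : ∀ i, (∏ x ∈ P i, q x) * t i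
        ≤ Real.exp (-(ℓ/(k:ℝ))) * ((1 - ℓ/(k:ℝ)) * t i + ℓ * T / (k:ℝ)^2) := by
      intro i
      rw [step4 i]
      have hu : 0 ≤ ℓ * t i / T := div_nonneg (mul_nonneg hℓ.le (ht0 i)) hcost.le
      have hkey := key_analytic hr0 hr1 hu
      have h2 := mul_le_mul_of_nonneg_left hkey (le_of_lt (div_pos hcost hℓ))
      have e1 : T / ℓ * (ℓ * t i / T * Real.exp (-(ℓ * t i / T)))
          = Real.exp (-(ℓ * t i / T)) * t i := by
        field_simp
      have e2 : T / ℓ * (Real.exp (-(ℓ / (k:ℝ))) * ((1 - ℓ / (k:ℝ)) * (ℓ * t i / T) + (ℓ / (k:ℝ)) ^ 2))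
          = Real.exp (-(ℓ / (k:ℝ))) * ((1 - ℓ/(k:ℝ)) * t i + ℓ * T / (k:ℝ)^2) := by
        field_simp
      rw [e1, e2] at h2
      exact h2
    calc ∑ i, (∏ x ∈ P i, q x) * t i
        ≤ ∑ i : Fin k, Real.exp (-(ℓ/(k:ℝ))) * ((1 - ℓ/(k:ℝ)) * t i + ℓ * T / (k:ℝ)^2) :=
          Finset.sum_le_sum fun i _ => hbound i
      _ = Real.exp (-(ℓ/(k:ℝ))) * ((1 - ℓ/(k:ℝ)) * T + (k:ℝ) * (ℓ * T / (k:ℝ)^2)) := by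
          rw [← Finset.mul_sum, Finset.sum_add_distrib, ← Finset.mul_sum, hT,
            Finset.sum_const, Finset.card_univ, Fintype.card_fin, nsmul_eq_mul]
      _ = Real.exp (-ℓ / (k:ℝ)) * T := by
          rw [neg_div]
          congr 1
          field_simp
          ring
  refine le_trans (Finset.sum_le_sum step1) ?_
  rw [step3]
  exact step5
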